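/- With notation as for the regularized singlet characters, for p < s ≤ 2p−1 one has ch[M^ε_{r,s}](τ) = ch[M^ε_{r−1,s−p}](τ) + ch[M^ε_{r,2p−s}](τ) + ch[M^ε_{r+1,s−p}](τ). -/

import Mathlib

open Complex

/-- `α₊ = √(2p)`. -/
noncomputable def alphaP (p : ℕ) : ℂ := (Real.sqrt (2 * p) : ℝ)

/-- `α₋ = −√(2/p)`. -/
noncomputable def alphaM (p : ℕ) : ℂ := -(Real.sqrt (2 / p) : ℝ)

/-- `α₀ = α₊ + α₋`. -/
noncomputable def alpha0 (p : ℕ) : ℂ := alphaP p + alphaM p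

/-- `α_{r,s} = −(rα₊ + sα₋ − α₀)/2`. -/
noncomputable def alphaRS (p : ℕ) (r s : ℤ) : ℂ :=
  -((r : ℂ) * alphaP p + (s : ℂ) * alphaM p - alpha0 p) / 2

/-- The Dedekind eta function `η(τ) = q^{1/24} ∏_{i≥1} (1 − q^i)`, `q = e^{2πiτ}`. -/
noncomputable def dedekindEta (τ : ℂ) : ℂ :=
  Complex.exp ((Real.pi : ℂ) * I * τ / 12) *
    ∏' n : ℕ, (1 - Complex.exp (2 * (Real.pi : ℂ) * I * τ * ((n : ℂ) + 1)))

/-- Regularized typical character `ch[F^ε_λ](τ) = e^{2πε(λ−α₀/2)} q^{(λ−α₀/2)²/2}/η(τ)`. -/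
noncomputable def chF (p : ℕ) (ε lam τ : ℂ) : ℂ :=
  Complex.exp (2 * (Real.pi : ℂ) * ε * (lam - alpha0 p / 2)) *
    Complex.exp ((Real.pi : ℂ) * I * τ * (lam - alpha0 p / 2)^2) / dedekindEta τ

/-- Regularized atypical character
`ch[M^ε_{r,s}](τ) = ∑_{n≥0} (ch[F^ε_{α_{r−2n−1,p−s}}](τ) − ch[F^ε_{α_{r−2n−2,s}}](τ))`. -/
noncomputable def chM (p : ℕ) (ε : ℂ) (r s : ℤ) (τ : ℂ) : ℂ :=
  ∑' n : ℕ, (chF p ε (alphaRS p (r - 2 * (n : ℤ) - 1) ((p : ℤ) - s)) τ -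
             chF p ε (alphaRS p (r - 2 * (n : ℤ) - 2) s) τ)

lemma sqrt_two_p_eq (p : ℕ) (hp : 0 < p) :
    Real.sqrt (2 * p) = p * Real.sqrt (2 / p) := by
  have hp0 : (0:ℝ) < p := by exact_mod_cast hp
  rw [show (p:ℝ) = Real.sqrt ((p:ℝ)^2) from (Real.sqrt_sq hp0.le).symm,
    ← Real.sqrt_mul (by positivity)]
  congr 1
  field_simp
  ring_nf
  rw [Real.sq_sqrt (by positivity)]

lemma alphaP_add (p : ℕ) (hp : 0 < p) : alphaP p + (p : ℂ) * alphaM p = 0 := by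
  unfold alphaP alphaM
  rw [sqrt_two_p_eq p hp]
  push_cast
  ring

lemma alphaRS_shift (p : ℕ) (hp : 0 < p) (a b : ℤ) :
    alphaRS p (a + 1) (b + p) = alphaRS p a b := by
  have hz := alphaP_add p hp
  unfold alphaRS
  push_cast
  linear_combination (-(1:ℂ)/2) * hz

lemma summable_chF (p : ℕ) (hp : 0 < p) (ε τ : ℂ) (hτ : 0 < τ.im) (c s : ℤ) :
    Summable fun n : ℕ => chF p ε (alphaRS p (c - 2 * (n : ℤ)) s) τ := by
  set a : ℝ := Real.sqrt (2 * p) with ha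
  have ha0 : 0 < a := Real.sqrt_pos.mpr (by positivity)
  set b : ℝ := -((c : ℝ) * a - (s : ℝ) * Real.sqrt (2 / p)) / 2 with hb
  have hb' : ((s : ℝ) * Real.sqrt (2 / ↑p)) = (c:ℝ) * a + 2 * b := by rw [hb]; ring
  have hx : ∀ n : ℕ, alphaRS p (c - 2 * (n : ℤ)) s - alpha0 p / 2 = ((a * n + b : ℝ) : ℂ) := by
    intro n
    unfold alphaRS alpha0 alphaP alphaM
    push_cast [← ha, hb']
    norm_cast
    push_cast
    ring
  set π : ℝ := Real.pi
  have hform : ∀ n : ℕ, chF p ε (alphaRS p (c - 2 * (n : ℤ)) s) τ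
      = (Complex.exp (2*(π:ℂ)*ε*b + (π:ℂ)*I*τ*(b:ℂ)^2) *
          jacobiTheta₂_term (n:ℤ) (-I*ε*a + τ*a*b) (((a:ℂ))^2*τ)) / dedekindEta τ := by
    intro n
    unfold chF jacobiTheta₂_term
    rw [hx n, ← Complex.exp_add, ← Complex.exp_add]
    congr 2
    push_cast
    linear_combination (2 * (Real.pi : ℂ) * ε * (a:ℂ) * (n:ℂ)) * Complex.I_sq
  have hsum : Summable fun m : ℤ => jacobiTheta₂_term m (-I*ε*a + τ*a*b) (((a:ℂ))^2*τ) := by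
    refine (summable_jacobiTheta₂_term_iff _ _).mpr ?_
    have : (((a:ℂ))^2*τ).im = a^2 * τ.im := by
      simp [Complex.mul_im, ← Complex.ofReal_pow]
    rw [this]
    positivity
  have h2 : Summable fun n : ℕ =>
      jacobiTheta₂_term (n:ℤ) (-I*ε*a + τ*a*b) (((a:ℂ))^2*τ) :=
    hsum.comp_injective (fun m n h => by exact_mod_cast h)
  exact Summable.congr (((h2.mul_left _).div_const _)) (fun n => (hform n).symm)

theorem stmt12 (p : ℕ) (hp : 2 ≤ p) (ε τ : ℂ) (hε : ε.re < 0) (hτ : 0 < τ.im)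
    (r s : ℤ) (hs1 : (p : ℤ) < s) (hs2 : s ≤ 2 * (p : ℤ) - 1) :
    chM p ε r s τ =
      chM p ε (r - 1) (s - (p : ℤ)) τ + chM p ε r (2 * (p : ℤ) - s) τ +
        chM p ε (r + 1) (s - (p : ℤ)) τ := by
  have hp0 : 0 < p := by omega
  -- summability of all the relevant chF sequences
  have S : ∀ (c k s' : ℤ), Summable fun n : ℕ => chF p ε (alphaRS p (c - 2 * (n:ℤ) - k) s') τ := by
    intro c k s'
    refine (summable_chF p hp0 ε τ hτ (c - k) s').congr fun n => ?_
    rw [show c - k - 2 * (n:ℤ) = c - 2 * (n:ℤ) - k from by ring]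
  unfold chM
  have SA : Summable fun n : ℕ =>
      (chF p ε (alphaRS p (r - 1 - 2 * (n:ℤ) - 1) ((p:ℤ) - (s - p))) τ -
       chF p ε (alphaRS p (r - 1 - 2 * (n:ℤ) - 2) (s - p)) τ) :=
    (S (r-1) 1 ((p:ℤ) - (s - p))).sub (S (r-1) 2 (s - p))
  have SB : Summable fun n : ℕ =>
      (chF p ε (alphaRS p (r - 2 * (n:ℤ) - 1) ((p:ℤ) - (2 * p - s))) τ -
       chF p ε (alphaRS p (r - 2 * (n:ℤ) - 2) (2 * p - s)) τ) :=
    (S r 1 ((p:ℤ) - (2 * p - s))).sub (S r 2 (2 * p - s))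
  have SC : Summable fun n : ℕ =>
      (chF p ε (alphaRS p (r + 1 - 2 * (n:ℤ) - 1) ((p:ℤ) - (s - p))) τ -
       chF p ε (alphaRS p (r + 1 - 2 * (n:ℤ) - 2) (s - p)) τ) :=
    (S (r+1) 1 ((p:ℤ) - (s - p))).sub (S (r+1) 2 (s - p))
  rw [← Summable.tsum_add SA SB, ← Summable.tsum_add (SA.add SB) SC]
  refine tsum_congr fun n => ?_
  have h₁ := alphaRS_shift p hp0 (r - 2 * (n:ℤ) - 1) ((p:ℤ) - s)
  have h₂ := alphaRS_shift p hp0 (r - 2 * (n:ℤ) - 3) (s - p)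
  rw [show r - 2 * (n:ℤ) - 1 + 1 = r - 2 * (n:ℤ) from by ring,
      show (p:ℤ) - s + p = 2 * p - s from by ring] at h₁
  rw [show r - 2 * (n:ℤ) - 3 + 1 = r - 2 * (n:ℤ) - 2 from by ring,
      show s - (p:ℤ) + p = s from by ring] at h₂
  rw [show r - 1 - 2 * (n:ℤ) - 1 = r - 2 * (n:ℤ) - 2 from by ring,
      show r - 1 - 2 * (n:ℤ) - 2 = r - 2 * (n:ℤ) - 3 from by ring,
      show r + 1 - 2 * (n:ℤ) - 1 = r - 2 * (n:ℤ) from by ring,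
      show r + 1 - 2 * (n:ℤ) - 2 = r - 2 * (n:ℤ) - 1 from by ring,
      show (p:ℤ) - (s - p) = 2 * p - s from by ring,
      show (p:ℤ) - (2 * p - s) = s - p from by ring]
  rw [← h₁, ← h₂]
  ring
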